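/- Let E, A be Banach spaces and Λ : E* → A a linear operator that is weak*-continuous on bounded sets. Then there exists a linear operator Γ : A* → E, weak*-continuous on bounded sets, such that ψ(Γφ) = φ(Λψ) for all ψ ∈ E* and φ ∈ A*. -/

import Mathlib

open NormedSpace

/-- `Λ` is weak*-continuous on bounded sets. -/
def IsWcbs {E A : Type*} [NormedAddCommGroup E] [NormedSpace ℂ E]
    [TopologicalSpace A] (Λ : StrongDual ℂ E → A) : Prop :=
  ContinuousOn (fun ψ : WeakDual ℂ E => Λ (WeakDual.toStrongDual ψ))
    {ψ : WeakDual ℂ E | ‖WeakDual.toStrongDual ψ‖ ≤ 1}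

section Aux

variable {E A : Type*} [NormedAddCommGroup E] [NormedSpace ℂ E]
  [NormedAddCommGroup A] [NormedSpace ℂ A]

/-- From continuity at `0` within the dual ball (weak* to norm), extract a finite set
condition. -/
lemma IsWcbs.finite_cond {g : WeakDual ℂ E → A} (hg0 : g 0 = 0)
    (hc : ContinuousWithinAt g {ψ : WeakDual ℂ E | ‖WeakDual.toStrongDual ψ‖ ≤ 1} 0)
    {ε : ℝ} (hε : 0 < ε) :
    ∃ s : Finset E, ∀ ψ : WeakDual ℂ E, ‖WeakDual.toStrongDual ψ‖ ≤ 1 →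
      (∀ x ∈ s, ψ x = 0) → ‖g ψ‖ ≤ ε := by
  have h1 : Metric.ball (0 : A) ε ∈ nhds (g 0) := by
    rw [hg0]; exact Metric.ball_mem_nhds _ hε
  have h2 := hc.tendsto h1
  rw [Filter.mem_map, mem_nhdsWithin] at h2
  obtain ⟨U, hUopen, hU0, hUsub⟩ := h2
  have hU : U ∈ nhds (0 : WeakDual ℂ E) := hUopen.mem_nhds hU0
  change U ∈ @nhds _ (TopologicalSpace.induced (fun (ψ : WeakDual ℂ E) (x : E) => ψ x)
    Pi.topologicalSpace) 0 at hU
  rw [nhds_induced (fun (ψ : WeakDual ℂ E) (x : E) => ψ x)] at hU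
  obtain ⟨V, hV, hVsub⟩ := hU
  rw [nhds_pi, Filter.mem_pi] at hV
  obtain ⟨I, hIfin, t, ht, htsub⟩ := hV
  refine ⟨hIfin.toFinset, fun ψ hψ hψ0 => ?_⟩
  have hmem : ψ ∈ U := by
    apply hVsub
    apply htsub
    intro x hx
    show ψ x ∈ t x
    rw [hψ0 x (hIfin.mem_toFinset.2 hx)]
    exact mem_of_mem_nhds (ht x)
  have := hUsub ⟨hmem, hψ⟩
  exact le_of_lt (by simpa using this)

variable [CompleteSpace E]

/-- A continuous linear functional on `E*` which is small on the intersections of kernels of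
finitely many evaluations is represented by an element of `E` (a Krein–Šmulian type result). -/
lemma repr_of_finite_cond (f : StrongDual ℂ E →L[ℂ] ℂ)
    (hf : ∀ ε : ℝ, 0 < ε → ∃ s : Finset E, ∀ ψ : StrongDual ℂ E, ‖ψ‖ ≤ 1 →
      (∀ x ∈ s, ψ x = 0) → ‖f ψ‖ ≤ ε) :
    ∃ x : E, ∀ ψ : StrongDual ℂ E, ψ x = f ψ := by
  have hclosed : IsClosed (Set.range (inclusionInDoubleDual ℂ E)) := by
    have h0 : IsClosed (Set.range ((inclusionInDoubleDualLi ℂ (E := E)) :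
        E → StrongDual ℂ (StrongDual ℂ E))) :=
      (Isometry.isClosedEmbedding (α := E) (γ := StrongDual ℂ (StrongDual ℂ E))
        (inclusionInDoubleDualLi ℂ (E := E)).isometry).isClosed_range
    exact h0
  have hmem : f ∈ closure (Set.range (inclusionInDoubleDual ℂ E)) := by
    refine (Metric.mem_closure_iff (α := StrongDual ℂ (StrongDual ℂ E))).2 ?_
    intro ε hε
    obtain ⟨s, hs⟩ := hf (ε/2) (by positivity)
    set p : Subspace ℂ (StrongDual ℂ E) :=
      ⨅ x ∈ s, LinearMap.ker (inclusionInDoubleDual ℂ E x).toLinearMap with hp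
    have hpmem : ∀ ψ : StrongDual ℂ E, ψ ∈ p ↔ ∀ x ∈ s, ψ x = 0 := by
      intro ψ
      simp [hp, Submodule.mem_iInf, LinearMap.mem_ker]
    have hrest : ∀ ψ : StrongDual ℂ E, ψ ∈ p → ‖f ψ‖ ≤ (ε/2) * ‖ψ‖ := by
      intro ψ hψ
      rcases eq_or_ne ψ 0 with rfl | hne
      · simp
      · have hn : (0:ℝ) < ‖ψ‖ := norm_pos_iff.2 hne
        have h1 : ‖(‖ψ‖⁻¹ : ℂ) • ψ‖ ≤ 1 := by
          rw [norm_smul]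
          simp [abs_of_pos hn, inv_mul_cancel₀ hn.ne', le_refl]
        have h2 : ∀ x ∈ s, ((‖ψ‖⁻¹ : ℂ) • ψ) x = 0 := by
          intro x hx
          simp [(hpmem ψ).1 hψ x hx]
        have h3 := hs _ h1 h2
        rw [map_smul, norm_smul] at h3
        have h4 : ‖(‖ψ‖⁻¹ : ℂ)‖ = ‖ψ‖⁻¹ := by
          simp [abs_of_pos hn]
        rw [h4] at h3
        have h7 : ‖f ψ‖ = ‖ψ‖ * (‖ψ‖⁻¹ * ‖f ψ‖) := by field_simp
        rw [h7, mul_comm (ε/2) ‖ψ‖]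
        exact mul_le_mul_of_nonneg_left h3 hn.le
    obtain ⟨g, hgext, hgnorm⟩ := exists_extension_norm_eq p (f.comp (p.subtypeL))
    have hgle : ‖g‖ ≤ ε/2 := by
      rw [hgnorm]
      apply ContinuousLinearMap.opNorm_le_bound _ (by positivity)
      rintro ⟨ψ, hψ⟩
      simpa using hrest ψ hψ
    have hker : ⨅ x : s, LinearMap.ker
        ((inclusionInDoubleDual ℂ E (x : E)).toLinearMap)
        ≤ LinearMap.ker ((f - g).toLinearMap) := by
      intro ψ hψ
      rw [Submodule.mem_iInf] at hψ
      have hψp : ψ ∈ p := by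
        rw [hpmem]
        intro x hx
        exact hψ ⟨x, hx⟩
      have h5 := (hgext ⟨ψ, hψp⟩).symm
      simp only [ContinuousLinearMap.comp_apply] at h5
      simp only [LinearMap.mem_ker, ContinuousLinearMap.coe_sub, LinearMap.sub_apply,
        ContinuousLinearMap.coe_coe, ContinuousLinearMap.sub_apply]
      rw [sub_eq_zero]
      exact h5
    have hspan := mem_span_of_iInf_ker_le_ker hker
    have hex : ∃ v : E, ∀ ψ : StrongDual ℂ E, f ψ - g ψ = ψ v := by
      obtain ⟨c, hc⟩ := (Submodule.mem_span_range_iff_exists_fun ℂ).1 hspan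
      refine ⟨∑ x : s, c x • (x : E), fun ψ => ?_⟩
      have h6 := DFunLike.congr_fun hc ψ
      simp only [LinearMap.coe_sum, Finset.sum_apply, LinearMap.smul_apply,
        ContinuousLinearMap.coe_coe, smul_eq_mul, dual_def, ContinuousLinearMap.coe_sub,
        LinearMap.sub_apply] at h6
      rw [map_sum]
      simp only [map_smul, smul_eq_mul]
      exact h6.symm
    obtain ⟨v, hv⟩ := hex
    refine ⟨inclusionInDoubleDual ℂ E v, ⟨v, rfl⟩, ?_⟩
    have heq : f - inclusionInDoubleDual ℂ E v = g := by
      ext ψ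
      simp only [ContinuousLinearMap.sub_apply, dual_def]
      linear_combination hv ψ
    calc dist f (inclusionInDoubleDual ℂ E v) = ‖f - inclusionInDoubleDual ℂ E v‖ :=
          dist_eq_norm (E := StrongDual ℂ (StrongDual ℂ E)) _ _
      _ = ‖g‖ := by rw [heq]
      _ ≤ ε/2 := hgle
      _ < ε := by linarith
  obtain ⟨x, hx⟩ := hclosed.closure_subset hmem
  exact ⟨x, fun ψ => by rw [← hx]; rfl⟩

end Aux

/-- Every wcbs linear operator `Λ : E* → A` admits a wcbs dual mapping `Γ : A* → E`
with `ψ(Γφ) = φ(Λψ)`. -/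
theorem exists_dual_mapping_of_wcbs {E A : Type*}
    [NormedAddCommGroup E] [NormedSpace ℂ E] [CompleteSpace E]
    [NormedAddCommGroup A] [NormedSpace ℂ A] [CompleteSpace A]
    (Λ : StrongDual ℂ E →ₗ[ℂ] A) (h : IsWcbs ⇑Λ) :
    ∃ Γ : StrongDual ℂ A →ₗ[ℂ] E, IsWcbs ⇑Γ ∧
      ∀ (ψ : StrongDual ℂ E) (φ : StrongDual ℂ A), ψ (Γ φ) = φ (Λ ψ) := by
  classical
  set S : Set (WeakDual ℂ E) := {ψ : WeakDual ℂ E | ‖WeakDual.toStrongDual ψ‖ ≤ 1} with hS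
  have hScompact : IsCompact S := by
    have : S = WeakDual.toStrongDual ⁻¹' Metric.closedBall 0 1 := by
      ext ψ; simp [hS, Metric.mem_closedBall, dist_zero_right]
    rw [this]
    exact WeakDual.isCompact_closedBall (𝕜 := ℂ) (E := E) 0 1
  have h0S : (0 : WeakDual ℂ E) ∈ S := by simp [hS]
  -- the image of the ball is compact, hence bounded
  have hKcompact : IsCompact ((fun ψ : WeakDual ℂ E => Λ (WeakDual.toStrongDual ψ)) '' S) :=
    hScompact.image_of_continuousOn h
  set K := (fun ψ : WeakDual ℂ E => Λ (WeakDual.toStrongDual ψ)) '' S with hK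
  obtain ⟨C, hC⟩ := hKcompact.isBounded.exists_norm_le
  have hC0 : 0 ≤ C :=
    le_trans (norm_nonneg (Λ (WeakDual.toStrongDual 0))) (hC _ ⟨0, h0S, rfl⟩)
  have hball : ∀ ψ : StrongDual ℂ E, ‖ψ‖ ≤ 1 → ‖Λ ψ‖ ≤ C := by
    intro ψ hψ
    exact hC _ ⟨WeakDual.toStrongDual.symm ψ, hψ, rfl⟩
  have hbound : ∀ ψ : StrongDual ℂ E, ‖Λ ψ‖ ≤ C * ‖ψ‖ := by
    intro ψ
    rcases eq_or_ne ψ 0 with rfl | hne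
    · simp
    · have hn : (0:ℝ) < ‖ψ‖ := norm_pos_iff.2 hne
      have h1 : ‖(‖ψ‖⁻¹ : ℂ) • ψ‖ ≤ 1 := by
        rw [norm_smul]
        simp [abs_of_pos hn, inv_mul_cancel₀ hn.ne', le_refl]
      have h2 := hball _ h1
      rw [map_smul, norm_smul] at h2
      have h4 : ‖(‖ψ‖⁻¹ : ℂ)‖ = ‖ψ‖⁻¹ := by simp [abs_of_pos hn]
      rw [h4] at h2
      have h7 : ‖Λ ψ‖ = ‖ψ‖ * (‖ψ‖⁻¹ * ‖Λ ψ‖) := by field_simp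
      rw [h7, mul_comm C ‖ψ‖]
      exact mul_le_mul_of_nonneg_left h2 hn.le
  set Λc : StrongDual ℂ E →L[ℂ] A := LinearMap.mkContinuous Λ C hbound with hΛc
  -- construct Γ pointwise
  have hrep : ∀ φ : StrongDual ℂ A, ∃ x : E, ∀ ψ : StrongDual ℂ E, ψ x = φ (Λ ψ) := by
    intro φ
    have hfc : ∀ ε : ℝ, 0 < ε → ∃ s : Finset E, ∀ ψ : StrongDual ℂ E, ‖ψ‖ ≤ 1 →
        (∀ x ∈ s, ψ x = 0) → ‖(φ.comp Λc) ψ‖ ≤ ε := by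
      intro ε hε
      have hcwa : ContinuousWithinAt
          (fun ψ : WeakDual ℂ E => φ (Λ (WeakDual.toStrongDual ψ))) S 0 :=
        (φ.continuous.comp_continuousOn h).continuousWithinAt h0S
      obtain ⟨s, hs⟩ := IsWcbs.finite_cond
        (g := fun ψ : WeakDual ℂ E => φ (Λ (WeakDual.toStrongDual ψ)))
        (by simp) hcwa hε
      exact ⟨s, fun ψ hψ hψ0 => hs (WeakDual.toStrongDual.symm ψ) hψ hψ0⟩
    obtain ⟨x, hx⟩ := repr_of_finite_cond (φ.comp Λc) hfc
    exact ⟨x, fun ψ => hx ψ⟩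
  have huniq : ∀ (x y : E), (∀ ψ : StrongDual ℂ E, ψ x = ψ y) → x = y := fun x y hxy =>
    (NormedSpace.eq_iff_forall_dual_eq ℂ).2 hxy
  choose Γ₀ hΓ₀ using hrep
  have hΓadd : ∀ φ₁ φ₂, Γ₀ (φ₁ + φ₂) = Γ₀ φ₁ + Γ₀ φ₂ := by
    intro φ₁ φ₂
    apply huniq
    intro ψ
    rw [map_add, hΓ₀, hΓ₀, hΓ₀]
    rfl
  have hΓsmul : ∀ (c : ℂ) (φ : StrongDual ℂ A), Γ₀ (c • φ) = c • Γ₀ φ := by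
    intro c φ
    apply huniq
    intro ψ
    rw [map_smul, hΓ₀, hΓ₀]
    rfl
  refine ⟨⟨⟨Γ₀, hΓadd⟩, hΓsmul⟩, ?_, fun ψ φ => hΓ₀ φ ψ⟩
  -- Γ is wcbs
  intro φ₀ hφ₀
  apply Metric.tendsto_nhds.2
  intro ε hε
  obtain ⟨t, htfin, htcover⟩ :=
    (Metric.totallyBounded_iff.1 hKcompact.totallyBounded) (ε/8) (by positivity)
  set W : Set (WeakDual ℂ A) := {φ : WeakDual ℂ A | ∀ a ∈ t, dist (φ a) (φ₀ a) < ε/8}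
    with hWdef
  have hWopen : IsOpen W := by
    have hWeq : W = ⋂ a ∈ t, (fun φ : WeakDual ℂ A => φ a) ⁻¹' Metric.ball (φ₀ a) (ε/8) := by
      ext φ; simp [hWdef, Metric.mem_ball]
    rw [hWeq]
    exact htfin.isOpen_biInter fun a _ =>
      (WeakDual.eval_continuous a).isOpen_preimage _ Metric.isOpen_ball
  have hW0 : φ₀ ∈ W := by
    intro a _
    simpa using by positivity
  filter_upwards [mem_nhdsWithin_of_mem_nhds (hWopen.mem_nhds hW0),
    self_mem_nhdsWithin] with φ hφW hφS
  rw [dist_eq_norm]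
  have hφn : ‖WeakDual.toStrongDual φ‖ ≤ 1 := hφS
  have hφ₀n : ‖WeakDual.toStrongDual φ₀‖ ≤ 1 := hφ₀
  set φ' : StrongDual ℂ A := WeakDual.toStrongDual φ with hφ'
  set φ₀' : StrongDual ℂ A := WeakDual.toStrongDual φ₀ with hφ₀'
  have key : ∀ ψ : StrongDual ℂ E, ‖ψ (Γ₀ φ' - Γ₀ φ₀')‖ ≤ (ε/2) * ‖ψ‖ := by
    intro ψ
    rcases eq_or_ne ψ 0 with rfl | hne
    · simp
    · have hn : (0:ℝ) < ‖ψ‖ := norm_pos_iff.2 hne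
      set u : StrongDual ℂ E := (‖ψ‖⁻¹ : ℂ) • ψ with hu
      have hu1 : ‖u‖ ≤ 1 := by
        rw [hu, norm_smul]
        simp [abs_of_pos hn, inv_mul_cancel₀ hn.ne', le_refl]
      set a : A := Λ u with ha
      have haK : a ∈ K := ⟨WeakDual.toStrongDual.symm u, hu1, rfl⟩
      obtain ⟨y, hyt, hay⟩ := Set.mem_iUnion₂.1 (htcover haK)
      have hay' : ‖a - y‖ ≤ ε/8 := by
        rw [← dist_eq_norm]
        exact le_of_lt (Metric.mem_ball.1 hay)
      have hmid : ‖φ' a - φ₀' a‖ ≤ ε/2 := by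
        have n1 : ‖φ' a - φ' y‖ ≤ ε/8 := by
          rw [← map_sub]
          calc ‖φ' (a - y)‖ ≤ ‖φ'‖ * ‖a - y‖ := φ'.le_opNorm _
            _ ≤ 1 * (ε/8) := mul_le_mul hφn hay' (norm_nonneg _) zero_le_one
            _ = ε/8 := one_mul _
        have n2 : ‖φ' y - φ₀' y‖ ≤ ε/8 := by
          rw [← dist_eq_norm]
          exact le_of_lt (hφW y hyt)
        have n3 : ‖φ₀' y - φ₀' a‖ ≤ ε/8 := by
          rw [← map_sub]
          calc ‖φ₀' (y - a)‖ ≤ ‖φ₀'‖ * ‖y - a‖ := φ₀'.le_opNorm _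
            _ ≤ 1 * (ε/8) := by
                rw [norm_sub_rev]
                exact mul_le_mul hφ₀n hay' (norm_nonneg _) zero_le_one
            _ = ε/8 := one_mul _
        calc ‖φ' a - φ₀' a‖ = ‖(φ' a - φ' y) + (φ' y - φ₀' y) + (φ₀' y - φ₀' a)‖ := by
              ring_nf
          _ ≤ ‖(φ' a - φ' y) + (φ' y - φ₀' y)‖ + ‖φ₀' y - φ₀' a‖ := norm_add_le _ _
          _ ≤ (‖φ' a - φ' y‖ + ‖φ' y - φ₀' y‖) + ‖φ₀' y - φ₀' a‖ := by
              gcongr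
              exact norm_add_le _ _
          _ ≤ (ε/8 + ε/8) + ε/8 := by gcongr
          _ ≤ ε/2 := by linarith
      have hψu : ψ = (‖ψ‖ : ℂ) • u := by
        rw [hu, smul_smul, mul_inv_cancel₀, one_smul]
        simpa using hn.ne'
      have hΛψ : Λ ψ = (‖ψ‖ : ℂ) • a := by
        conv_lhs => rw [hψu]
        rw [map_smul]
      have happ : ψ (Γ₀ φ' - Γ₀ φ₀') = (‖ψ‖ : ℂ) * (φ' a - φ₀' a) := by
        rw [map_sub, hΓ₀, hΓ₀, hΛψ, map_smul, map_smul, smul_eq_mul, smul_eq_mul]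
        ring
      rw [happ, norm_mul]
      have : ‖(‖ψ‖ : ℂ)‖ = ‖ψ‖ := by simp [abs_of_pos hn]
      rw [this, mul_comm (ε/2) ‖ψ‖]
      exact mul_le_mul_of_nonneg_left hmid hn.le
  have hle : ‖Γ₀ φ' - Γ₀ φ₀'‖ ≤ ε/2 := by
    apply norm_le_dual_bound ℂ _ (by positivity)
    exact key
  calc ‖Γ₀ φ' - Γ₀ φ₀'‖ ≤ ε/2 := hle
    _ < ε := by linarith
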